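/- (Encoding part of Theorem 4 / Proposition 3) Fix β ∈ (0,1) and R₀ with β < R₀ ≤ 1. For each n, let lₙ = ⌈R₀·n⌉, let G₀(n) be a uniformly random n×lₙ matrix over 𝔽₂, let s(n) be a random defect pattern with parameter β independent of G₀(n), let t(n) ∈ 𝔽₂ⁿ be an arbitrary fixed vector, and let b(n) ∈ 𝔽₂^{U(s(n))} be defined by b(n)ᵢ = t(n)ᵢ + s(n)ᵢ for i ∈ U(s(n)). Then the probability that the linear system G₀(n)^{U(s(n))} d = b(n) (unknown d ∈ 𝔽₂^{lₙ}) has no solution tends to 0 as n → ∞. -/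

import Mathlib

/-- A defect pattern is `s : Fin n → Option (ZMod 2)`, where `s i = none` means cell `i`
is normal (`λ`) and `s i = some v` means cell `i` is stuck at value `v`.
`defectWt β s` is the probability of the pattern `s` when the cells are i.i.d. with
`P(sᵢ = 0) = P(sᵢ = 1) = β/2` and `P(sᵢ = λ) = 1 - β`. -/
noncomputable def defectWt (n : ℕ) (β : ℝ) (s : Fin n → Option (ZMod 2)) : ℝ :=
  ∏ i, if s i = none then 1 - β else β / 2

/-- For each blocklength `n`, the probability (over a uniformly random `n × ⌈R₀ n⌉`
matrix `G₀` and an independent random defect pattern `s` with parameter `β`) that the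
linear system `G₀^{U(s)} d = b`, with `bᵢ = tᵢ + sᵢ` on the stuck-at cells, has no
solution. -/
noncomputable def encFailProb (β R₀ : ℝ) (t : (n : ℕ) → Fin n → ZMod 2) (n : ℕ) : ℝ :=
  ∑ G : Matrix (Fin n) (Fin ⌈R₀ * n⌉₊) (ZMod 2),
    ∑ s : Fin n → Option (ZMod 2),
      ((1 : ℝ) / 2 ^ (n * ⌈R₀ * n⌉₊)) * defectWt n β s *
        (if ¬ ∃ d : Fin ⌈R₀ * n⌉₊ → ZMod 2,
            ∀ i, ∀ v : ZMod 2, s i = some v → G.mulVec d i = t n i + v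
         then 1 else 0)


open Finset Matrix

instance fact_prime_two : Fact (Nat.Prime 2) := ⟨Nat.prime_two⟩


lemma aux_surj {m : Type*} [Fintype m] {l : ℕ} (M : Matrix m (Fin l) (ZMod 2))
    (h : LinearIndependent (ZMod 2) M) : Function.Surjective M.mulVec := by
  have h2 : LinearMap.range M.mulVecLin = ⊤ := by
    apply Submodule.eq_top_of_finrank_eq
    have h1 := h.rank_matrix
    rw [Matrix.rank] at h1
    rw [h1, Module.finrank_pi]
  intro y
  obtain ⟨d, hd⟩ := h2 ▸ Submodule.mem_top (x := y)
  exact ⟨d, hd⟩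

lemma aux_exists_c {n l : ℕ} (G : Matrix (Fin n) (Fin l) (ZMod 2))
    (s : Fin n → Option (ZMod 2)) (t : Fin n → ZMod 2)
    (h : ¬ ∃ d : Fin l → ZMod 2, ∀ i, ∀ v : ZMod 2, s i = some v → G.mulVec d i = t i + v) :
    ∃ c : Fin n → ZMod 2, c ≠ 0 ∧ (∀ i, s i = none → c i = 0) ∧ Matrix.vecMul c G = 0 := by
  classical
  by_contra hc
  push_neg at hc
  -- hc : ∀ c, c ≠ 0 → (∀ i, s i = none → c i = 0) → vecMul c G ≠ 0
  set M : Matrix {i : Fin n // s i ≠ none} (Fin l) (ZMod 2) := fun u j => G u.1 j with hMdef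
  have hM : LinearIndependent (ZMod 2) M := by
    rw [Fintype.linearIndependent_iff]
    intro g hg u
    set c : Fin n → ZMod 2 := fun i => if hi : s i = none then 0 else g ⟨i, hi⟩ with hcdef
    have hsupp : ∀ i, s i = none → c i = 0 := fun i hi => by simp [hcdef, hi]
    have hvm : Matrix.vecMul c G = 0 := by
      funext j
      have h1 : Matrix.vecMul c G j = ∑ i, c i * G i j := by
        simp [Matrix.vecMul, dotProduct]
      have h2 : ∑ i, c i * G i j
          = ∑ i ∈ univ.filter (fun i => s i ≠ none), c i * G i j := by
        refine (Finset.sum_subset (Finset.filter_subset _ _) fun i _ hni => ?_).symm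
        have : s i = none := by simpa using hni
        simp [hsupp i this]
      have h3 : ∑ i ∈ univ.filter (fun i => s i ≠ none), c i * G i j
          = ∑ u : {i : Fin n // s i ≠ none}, c u.1 * G u.1 j := by
        exact Finset.sum_subtype (p := fun i => s i ≠ none) _ (by simp) (fun i => c i * G i j)
      have h4 : ∑ u : {i : Fin n // s i ≠ none}, c u.1 * G u.1 j
          = ∑ u : {i : Fin n // s i ≠ none}, g u * M u j := by
        refine Finset.sum_congr rfl fun u _ => ?_
        simp [hcdef, u.2, hMdef]
      have h5 : ∑ u : {i : Fin n // s i ≠ none}, g u * M u j = 0 := by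
        have := congr_fun hg j
        simpa [Finset.sum_apply] using this
      rw [h1, h2, h3, h4, h5]; rfl
    have hc0 : c = 0 := by
      by_contra hne
      exact hc c hne hsupp hvm
    have : c u.1 = 0 := by rw [hc0]; rfl
    simpa [hcdef, u.2] using this
  obtain ⟨d, hd⟩ := aux_surj M hM (fun u => t u.1 + (s u.1).iget)
  apply h
  refine ⟨d, fun i v hv => ?_⟩
  have hu : s i ≠ none := by simp [hv]
  have := congr_fun hd ⟨i, hu⟩
  have hgm : G.mulVec d i = M.mulVec d ⟨i, hu⟩ := rfl
  rw [hgm, this]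
  simp [hv]



lemma aux_fiber {n l : ℕ} (c : Fin n → ZMod 2) (hc : c ≠ 0) :
    (Finset.univ.filter
        (fun G : Matrix (Fin n) (Fin l) (ZMod 2) => Matrix.vecMul c G = 0)).card * 2 ^ l
      = 2 ^ (n * l) := by
  classical
  obtain ⟨i₀, hi₀⟩ := Function.ne_iff.mp hc
  have h1 : c i₀ = 1 := by
    have : ∀ x : ZMod 2, x ≠ 0 → x = 1 := by decide
    exact this _ hi₀
  set rowM : (Fin l → ZMod 2) → Matrix (Fin n) (Fin l) (ZMod 2) :=
    fun y i j => if i = i₀ then y j else 0 with hrowM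
  have hrow : ∀ y, Matrix.vecMul c (rowM y) = y := by
    intro y
    funext j
    simp only [Matrix.vecMul, dotProduct, hrowM, mul_ite, mul_zero]
    rw [Finset.sum_ite_eq' Finset.univ i₀ (fun i => c i * y j)]
    simp [h1]
  let e : ({G : Matrix (Fin n) (Fin l) (ZMod 2) // Matrix.vecMul c G = 0} × (Fin l → ZMod 2))
      ≃ Matrix (Fin n) (Fin l) (ZMod 2) :=
  { toFun := fun p => p.1.1 + rowM p.2
    invFun := fun H => (⟨H - rowM (Matrix.vecMul c H), by
        rw [Matrix.vecMul_sub, hrow, sub_self]⟩, Matrix.vecMul c H)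
    left_inv := fun p => by
      have hv : Matrix.vecMul c (p.1.1 + rowM p.2) = p.2 := by
        rw [Matrix.vecMul_add, p.1.2, hrow, zero_add]
      ext : 1
      · apply Subtype.ext
        simp [hv]
      · simp [hv]
    right_inv := fun H => by simp }
  have hcard := Fintype.card_congr e
  rw [Fintype.card_prod, Fintype.card_subtype] at hcard
  have h2 : Fintype.card (Fin l → ZMod 2) = 2 ^ l := by
    rw [Fintype.card_fun]; simp
  have h3 : Fintype.card (Matrix (Fin n) (Fin l) (ZMod 2)) = 2 ^ (n * l) := by
    have e2 : Matrix (Fin n) (Fin l) (ZMod 2) ≃ (Fin n → Fin l → ZMod 2) := Equiv.refl _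
    rw [Fintype.card_congr e2, Fintype.card_fun, h2, ← pow_mul, Nat.mul_comm]
    simp
  rw [h2, h3] at hcard
  exact hcard

lemma aux_count {n l : ℕ} (s : Fin n → Option (ZMod 2)) (t : Fin n → ZMod 2)
    [DecidablePred fun G : Matrix (Fin n) (Fin l) (ZMod 2) =>
      ¬ ∃ d : Fin l → ZMod 2, ∀ i, ∀ v : ZMod 2, s i = some v → G.mulVec d i = t i + v] :
    (Finset.univ.filter
        (fun G : Matrix (Fin n) (Fin l) (ZMod 2) =>
          ¬ ∃ d : Fin l → ZMod 2, ∀ i, ∀ v : ZMod 2, s i = some v →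
            G.mulVec d i = t i + v)).card * 2 ^ l
      ≤ 2 ^ ((Finset.univ.filter (fun i : Fin n => s i ≠ none)).card) * 2 ^ (n * l) := by
  classical
  set C : Finset (Fin n → ZMod 2) :=
    Finset.univ.filter (fun c => c ≠ 0 ∧ ∀ i, s i = none → c i = 0) with hC
  have hsub : (Finset.univ.filter
      (fun G : Matrix (Fin n) (Fin l) (ZMod 2) =>
        ¬ ∃ d : Fin l → ZMod 2, ∀ i, ∀ v : ZMod 2, s i = some v →
          G.mulVec d i = t i + v))
      ⊆ C.biUnion (fun c => Finset.univ.filter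
          (fun G : Matrix (Fin n) (Fin l) (ZMod 2) => Matrix.vecMul c G = 0)) := by
    intro G hG
    rw [Finset.mem_filter] at hG
    obtain ⟨c, hc1, hc2, hc3⟩ := aux_exists_c G s t hG.2
    refine Finset.mem_biUnion.mpr ⟨c, ?_, ?_⟩
    · rw [hC, Finset.mem_filter]; exact ⟨Finset.mem_univ _, hc1, hc2⟩
    · rw [Finset.mem_filter]; exact ⟨Finset.mem_univ _, hc3⟩
  have hcardC : C.card ≤ 2 ^ ((Finset.univ.filter (fun i : Fin n => s i ≠ none)).card) := by
    have hinj : ∀ c₁ ∈ C, ∀ c₂ ∈ C,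
        (fun (u : {i : Fin n // s i ≠ none}) => c₁ u.1)
          = (fun (u : {i : Fin n // s i ≠ none}) => c₂ u.1) → c₁ = c₂ := by
      intro c₁ h₁ c₂ h₂ hres
      rw [hC, Finset.mem_filter] at h₁ h₂
      funext i
      by_cases hi : s i = none
      · rw [h₁.2.2 i hi, h₂.2.2 i hi]
      · exact congr_fun hres ⟨i, hi⟩
    have := Finset.card_le_card_of_injOn
      (f := fun c (u : {i : Fin n // s i ≠ none}) => c u.1)
      (fun c _ => Finset.mem_univ _) (fun c₁ h₁ c₂ h₂ h => hinj c₁ h₁ c₂ h₂ h)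
    calc C.card ≤ (Finset.univ : Finset ({i : Fin n // s i ≠ none} → ZMod 2)).card := this
      _ = 2 ^ ((Finset.univ.filter (fun i : Fin n => s i ≠ none)).card) := by
          rw [Finset.card_univ, Fintype.card_fun, Fintype.card_subtype]
          simp
  calc (Finset.univ.filter _).card * 2 ^ l
      ≤ (C.biUnion (fun c => Finset.univ.filter
          (fun G : Matrix (Fin n) (Fin l) (ZMod 2) => Matrix.vecMul c G = 0))).card * 2 ^ l := by
        exact Nat.mul_le_mul_right _ (Finset.card_le_card hsub)
    _ ≤ (∑ c ∈ C, (Finset.univ.filter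
          (fun G : Matrix (Fin n) (Fin l) (ZMod 2) => Matrix.vecMul c G = 0)).card) * 2 ^ l := by
        exact Nat.mul_le_mul_right _ Finset.card_biUnion_le
    _ = ∑ c ∈ C, (Finset.univ.filter
          (fun G : Matrix (Fin n) (Fin l) (ZMod 2) => Matrix.vecMul c G = 0)).card * 2 ^ l := by
        rw [Finset.sum_mul]
    _ = ∑ c ∈ C, 2 ^ (n * l) := by
        refine Finset.sum_congr rfl fun c hc => ?_
        rw [hC, Finset.mem_filter] at hc
        exact aux_fiber c hc.2.1
    _ = C.card * 2 ^ (n * l) := by rw [Finset.sum_const, smul_eq_mul]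
    _ ≤ 2 ^ ((Finset.univ.filter (fun i : Fin n => s i ≠ none)).card) * 2 ^ (n * l) :=
        Nat.mul_le_mul_right _ hcardC

lemma aux_cardM (n l : ℕ) :
    Fintype.card (Matrix (Fin n) (Fin l) (ZMod 2)) = 2 ^ (n * l) := by
  classical
  have e2 : Matrix (Fin n) (Fin l) (ZMod 2) ≃ (Fin n → Fin l → ZMod 2) := Equiv.refl _
  have h2 : Fintype.card (Fin l → ZMod 2) = 2 ^ l := by rw [Fintype.card_fun]; simp
  rw [Fintype.card_congr e2, Fintype.card_fun, h2, ← pow_mul, Nat.mul_comm]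
  simp

lemma main_bound (β R₀ θ : ℝ) (hβ₀ : 0 < β) (hβ₁ : β < 1) (hθ₀ : 0 < θ) (hθ₁ : θ ≤ 1)
    (t : (n : ℕ) → Fin n → ZMod 2) (n : ℕ) :
    encFailProb β R₀ t n
      ≤ ((1 - β + β * (2:ℝ) ^ θ) / (2:ℝ) ^ (θ * R₀)) ^ n := by
  classical
  set l : ℕ := ⌈R₀ * n⌉₊ with hl
  set a : ℝ := (2:ℝ) ^ θ with ha
  have ha0 : 0 < a := Real.rpow_pos_of_pos two_pos θ
  have ha1 : 1 ≤ a := by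
    rw [ha, show (1:ℝ) = (2:ℝ) ^ (0:ℝ) by rw [Real.rpow_zero]]
    exact Real.rpow_le_rpow_of_exponent_le one_le_two hθ₀.le
  have ham : ∀ m : ℕ, a ^ m = (2:ℝ) ^ (θ * m) := by
    intro m
    rw [ha, ← Real.rpow_natCast ((2:ℝ) ^ θ) m, ← Real.rpow_mul (by norm_num : (0:ℝ) ≤ 2)]
  have h2m : ∀ m : ℕ, ((2:ℝ) ^ m : ℝ) = (2:ℝ) ^ (m : ℝ) := fun m =>
    (Real.rpow_natCast 2 m).symm
  -- abbreviations
  set k : (Fin n → Option (ZMod 2)) → ℕ :=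
    fun s => (Finset.univ.filter (fun i : Fin n => s i ≠ none)).card with hk
  set P : Matrix (Fin n) (Fin l) (ZMod 2) → (Fin n → Option (ZMod 2)) → Prop :=
    fun G s => ¬ ∃ d : Fin l → ZMod 2,
        ∀ i, ∀ v : ZMod 2, s i = some v → G.mulVec d i = t n i + v with hP
  have hdw : ∀ s, 0 ≤ defectWt n β s := by
    intro s
    refine Finset.prod_nonneg fun i _ => ?_
    split <;> [linarith; positivity]
  -- Step A : rewrite as a sum over s
  have hA : encFailProb β R₀ t n
      = ∑ s : Fin n → Option (ZMod 2),
          ((1:ℝ) / 2 ^ (n * l)) * defectWt n β s *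
            ((Finset.univ.filter (fun G : Matrix (Fin n) (Fin l) (ZMod 2) => P G s)).card) := by
    rw [encFailProb, Finset.sum_comm]
    refine Finset.sum_congr rfl fun s _ => ?_
    rw [← Finset.mul_sum, Finset.sum_boole]
  -- Step B : per-pattern bound
  have hB : ∀ s : Fin n → Option (ZMod 2),
      ((1:ℝ) / 2 ^ (n * l)) * defectWt n β s *
          ((Finset.univ.filter (fun G : Matrix (Fin n) (Fin l) (ZMod 2) => P G s)).card)
        ≤ defectWt n β s * a ^ (k s) / a ^ l := by
    intro s
    have hcount : ((Finset.univ.filter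
          (fun G : Matrix (Fin n) (Fin l) (ZMod 2) => P G s)).card : ℝ) * 2 ^ l
        ≤ 2 ^ (k s) * 2 ^ (n * l) := by
      exact_mod_cast aux_count (l := l) s (t n)
    have hcard1 : ((Finset.univ.filter
          (fun G : Matrix (Fin n) (Fin l) (ZMod 2) => P G s)).card : ℝ) ≤ 2 ^ (n * l) := by
      have h1 := Finset.card_filter_le Finset.univ (fun G : Matrix (Fin n) (Fin l) (ZMod 2) => P G s)
      rw [Finset.card_univ, aux_cardM n l] at h1
      exact_mod_cast h1
    have key : ((1:ℝ) / 2 ^ (n * l)) *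
          ((Finset.univ.filter (fun G : Matrix (Fin n) (Fin l) (ZMod 2) => P G s)).card)
        ≤ a ^ (k s) / a ^ l := by
      have hX : (0:ℝ) < 2 ^ (n * l) := by positivity
      rcases le_total l (k s) with hkl | hkl
      · have h1 : ((1:ℝ) / 2 ^ (n * l)) *
            ((Finset.univ.filter (fun G : Matrix (Fin n) (Fin l) (ZMod 2) => P G s)).card) ≤ 1 := by
          rw [div_mul_eq_mul_div, one_mul, div_le_one hX]
          exact hcard1
        have h2 : (1:ℝ) ≤ a ^ (k s) / a ^ l :=
          (one_le_div (pow_pos ha0 l)).mpr (pow_le_pow_right₀ ha1 hkl)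
        linarith
      · have h1 : ((1:ℝ) / 2 ^ (n * l)) *
            ((Finset.univ.filter (fun G : Matrix (Fin n) (Fin l) (ZMod 2) => P G s)).card)
            ≤ 2 ^ (k s) / 2 ^ l := by
          rw [div_mul_eq_mul_div, one_mul, div_le_div_iff₀ hX (by positivity)]
          calc ((Finset.univ.filter
                (fun G : Matrix (Fin n) (Fin l) (ZMod 2) => P G s)).card : ℝ) * 2 ^ l
              ≤ 2 ^ (k s) * 2 ^ (n * l) := hcount
            _ = 2 ^ (k s) * 2 ^ (n * l) := rfl
        refine h1.trans ?_
        rw [div_le_div_iff₀ (by positivity) (by positivity), ham l, ham (k s),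
          h2m (k s), h2m l, ← Real.rpow_add two_pos, ← Real.rpow_add two_pos]
        apply Real.rpow_le_rpow_of_exponent_le one_le_two
        have hkl' : ((k s : ℕ) : ℝ) ≤ (l : ℝ) := Nat.cast_le.mpr hkl
        nlinarith
    calc ((1:ℝ) / 2 ^ (n * l)) * defectWt n β s *
          ((Finset.univ.filter (fun G : Matrix (Fin n) (Fin l) (ZMod 2) => P G s)).card)
        = defectWt n β s * (((1:ℝ) / 2 ^ (n * l)) *
            ((Finset.univ.filter (fun G : Matrix (Fin n) (Fin l) (ZMod 2) => P G s)).card)) := by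
          ring
      _ ≤ defectWt n β s * (a ^ (k s) / a ^ l) := by
          exact mul_le_mul_of_nonneg_left key (hdw s)
      _ = defectWt n β s * a ^ (k s) / a ^ l := by ring
  -- Step C : the sum over patterns
  have hC : ∑ s : Fin n → Option (ZMod 2), defectWt n β s * a ^ (k s)
      = (1 - β + β * a) ^ n := by
    have hterm : ∀ s : Fin n → Option (ZMod 2), defectWt n β s * a ^ (k s)
        = ∏ i, (fun o : Option (ZMod 2) =>
            if o = none then 1 - β else β / 2 * a) (s i) := by
      intro s
      have hpow : a ^ (k s) = ∏ i, (if s i = none then (1:ℝ) else a) := by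
        rw [hk]
        calc a ^ (Finset.univ.filter (fun i : Fin n => s i ≠ none)).card
            = ∏ _i ∈ Finset.univ.filter (fun i : Fin n => s i ≠ none), a :=
              (Finset.prod_const a).symm
          _ = ∏ i, (if s i = none then (1:ℝ) else a) := by
              rw [Finset.prod_filter]
              refine Finset.prod_congr rfl fun i _ => ?_
              by_cases h : s i = none <;> simp [h]
      rw [defectWt, hpow, ← Finset.prod_mul_distrib]
      refine Finset.prod_congr rfl fun i _ => ?_
      by_cases h : s i = none <;> simp [h]
    calc ∑ s : Fin n → Option (ZMod 2), defectWt n β s * a ^ (k s)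
        = ∑ s : Fin n → Option (ZMod 2), ∏ i, (fun o : Option (ZMod 2) =>
            if o = none then 1 - β else β / 2 * a) (s i) :=
          Finset.sum_congr rfl fun s _ => hterm s
      _ = ∏ _i : Fin n, ∑ o : Option (ZMod 2),
            (if o = none then 1 - β else β / 2 * a) :=
          (Fintype.prod_sum (fun (_ : Fin n) (o : Option (ZMod 2)) =>
            if o = none then 1 - β else β / 2 * a)).symm
      _ = (1 - β + β * a) ^ n := by
          have hone : ∑ o : Option (ZMod 2), (if o = none then 1 - β else β / 2 * a)
              = 1 - β + β * a := by
            rw [Fintype.sum_option]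
            have h2 : ∑ v : ZMod 2, (if (some v : Option (ZMod 2)) = none then 1 - β
                else β / 2 * a) = 2 * (β / 2 * a) := by
              rw [Finset.sum_congr rfl (fun v _ => if_neg (by simp))]
              rw [Finset.sum_const, Finset.card_univ, ZMod.card, nsmul_eq_mul]
              norm_num
            rw [h2, if_pos rfl]
            ring
          rw [hone, Finset.prod_const, Finset.card_univ, Fintype.card_fin]
  -- Step D : combine
  have hnum : (0:ℝ) ≤ 1 - β + β * a := by nlinarith
  calc encFailProb β R₀ t n
      = ∑ s : Fin n → Option (ZMod 2),
          ((1:ℝ) / 2 ^ (n * l)) * defectWt n β s *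
            ((Finset.univ.filter (fun G : Matrix (Fin n) (Fin l) (ZMod 2) => P G s)).card) := hA
    _ ≤ ∑ s : Fin n → Option (ZMod 2), defectWt n β s * a ^ (k s) / a ^ l :=
        Finset.sum_le_sum fun s _ => hB s
    _ = (∑ s : Fin n → Option (ZMod 2), defectWt n β s * a ^ (k s)) / a ^ l := by
        rw [Finset.sum_div]
    _ = (1 - β + β * a) ^ n / a ^ l := by rw [hC]
    _ ≤ (1 - β + β * a) ^ n / (2:ℝ) ^ (θ * (R₀ * n)) := by
        have hden : (2:ℝ) ^ (θ * (R₀ * n)) ≤ a ^ l := by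
          rw [ham l]
          apply Real.rpow_le_rpow_of_exponent_le one_le_two
          exact mul_le_mul_of_nonneg_left (Nat.le_ceil _) hθ₀.le
        gcongr
    _ = ((1 - β + β * a) / (2:ℝ) ^ (θ * R₀)) ^ n := by
        rw [div_pow]
        congr 1
        rw [← Real.rpow_natCast ((2:ℝ) ^ (θ * R₀)) n, ← Real.rpow_mul (by norm_num : (0:ℝ) ≤ 2),
          mul_assoc]

theorem stmt17 (β R₀ : ℝ) (hβ₀ : 0 < β) (hβ₁ : β < 1)
    (hR₀ : β < R₀) (hR₁ : R₀ ≤ 1)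
    (t : (n : ℕ) → Fin n → ZMod 2) :
    Filter.Tendsto (encFailProb β R₀ t) Filter.atTop (nhds 0) := by
  set θ : ℝ := min 1 ((R₀ - β) / (2 * β)) with hθdef
  have hθ₀ : 0 < θ := lt_min one_pos (div_pos (by linarith) (by linarith))
  have hθ₁ : θ ≤ 1 := min_le_left _ _
  set a : ℝ := (2:ℝ) ^ θ with ha
  have ha0 : 0 < a := Real.rpow_pos_of_pos two_pos θ
  set x : ℝ := θ * Real.log 2 with hx
  have hlog0 : 0 < Real.log 2 := Real.log_pos one_lt_two
  have hlog1 : Real.log 2 ≤ 1 := by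
    have := Real.log_le_sub_one_of_pos (by norm_num : (0:ℝ) < 2)
    linarith
  have hx0 : 0 < x := by positivity
  have hx1 : x ≤ 1 := by
    rw [hx]
    calc θ * Real.log 2 ≤ 1 * 1 := by
          apply mul_le_mul hθ₁ hlog1 hlog0.le zero_le_one
      _ = 1 := by norm_num
  -- upper bound on a = exp x
  have ha_eq : a = Real.exp x := by
    rw [ha, Real.rpow_def_of_pos two_pos, hx, mul_comm]
  have hexp : Real.exp x ≤ 1 + x + x ^ 2 := by
    have h := Real.exp_bound' hx0.le hx1 (n := 2) (by norm_num)
    have h2 : (∑ m ∈ Finset.range 2, x ^ m / m.factorial) = 1 + x := by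
      simp [Finset.sum_range_succ]
    rw [h2] at h
    norm_num [Nat.factorial] at h
    nlinarith [sq_nonneg x]
  -- lower bound on 2^(θ R₀)
  have hlow : 1 + R₀ * x ≤ (2:ℝ) ^ (θ * R₀) := by
    have heq : Real.log 2 * (θ * R₀) = R₀ * x := by rw [hx]; ring
    rw [Real.rpow_def_of_pos two_pos, heq]
    have := Real.add_one_le_exp (R₀ * x)
    linarith
  -- βx < R₀ - β
  have hβx : β * x < R₀ - β := by
    have hθle : θ ≤ (R₀ - β) / (2 * β) := min_le_right _ _
    have hxθ : x ≤ θ := by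
      rw [hx]
      nlinarith [mul_nonneg hθ₀.le (sub_nonneg.mpr hlog1)]
    have h1 : β * x ≤ β * θ := mul_le_mul_of_nonneg_left hxθ hβ₀.le
    have h2 : β * θ ≤ (R₀ - β) / 2 := by
      have h3 := mul_le_mul_of_nonneg_left hθle hβ₀.le
      have h4 : β * ((R₀ - β) / (2 * β)) = (R₀ - β) / 2 := by
        field_simp
      linarith
    linarith
  set r : ℝ := (1 - β + β * a) / (2:ℝ) ^ (θ * R₀) with hr
  have hden : (0:ℝ) < (2:ℝ) ^ (θ * R₀) := Real.rpow_pos_of_pos two_pos _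
  have hr0 : 0 ≤ r := by
    apply div_nonneg _ hden.le
    nlinarith
  have hr1 : r < 1 := by
    rw [hr, div_lt_one hden]
    have hup : 1 - β + β * a ≤ 1 - β + β * (1 + x + x ^ 2) := by
      rw [ha_eq]; nlinarith
    have : 1 - β + β * (1 + x + x ^ 2) < 1 + R₀ * x := by nlinarith
    linarith
  have h0 : ∀ m, 0 ≤ encFailProb β R₀ t m := by
    intro m
    apply Finset.sum_nonneg
    intro G _
    apply Finset.sum_nonneg
    intro s _
    have hdw : 0 ≤ defectWt m β s := by
      apply Finset.prod_nonneg
      intro i _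
      split <;> [linarith; positivity]
    refine mul_nonneg (mul_nonneg (by positivity) hdw) ?_
    by_cases hcond : ∃ d : Fin ⌈R₀ * m⌉₊ → ZMod 2,
        ∀ i, ∀ v : ZMod 2, s i = some v → G.mulVec d i = t m i + v
    · rw [if_neg (not_not.mpr hcond)]
    · rw [if_pos hcond]
      norm_num
  exact squeeze_zero h0 (fun m => main_bound β R₀ θ hβ₀ hβ₁ hθ₀ hθ₁ t m)
    (tendsto_pow_atTop_nhds_zero_of_lt_one hr0 hr1)
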